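/- For every prime Schröder tree t ∈ PST_n, the sets S_v of sectors seen by the internal vertices v of t are nonempty and pairwise disjoint, their union is {1,…,n}, and the resulting set partition V(t) = {S_v : v internal vertex of t} of {1,…,n} is a noncrossing partition; in particular, the number of blocks of V(t) equals i(t), the number of internal vertices of t. -/

import Mathlib

inductive PTree : Type where
  | node : List PTree → PTree

mutual
  def leavesT : PTree → ℕ
    | .node [] => 1
    | .node (t :: ts) => leavesT t + leavesL ts
  def leavesL : List PTree → ℕ
    | [] => 0
    | t :: ts => leavesT t + leavesL ts
end

mutual
  def inodesT : PTree → ℕ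
    | .node [] => 0
    | .node (t :: ts) => 1 + inodesT t + inodesL ts
  def inodesL : List PTree → ℕ
    | [] => 0
    | t :: ts => inodesT t + inodesL ts
end

inductive Reduced : PTree → Prop where
  | leaf : Reduced (.node [])
  | node : ∀ ts : List PTree, 2 ≤ ts.length → (∀ t ∈ ts, Reduced t) → Reduced (.node ts)

def IsPrimeTree (t : PTree) : Prop :=
  Reduced t ∧ ∃ ts : List PTree, t = .node ts ∧ ts.getLast? = some (.node [])

def PST (n : ℕ) : Set PTree := {t | IsPrimeTree t ∧ leavesT t = n + 1}

def rootSectors : ℕ → List PTree → List ℕ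
  | _, [] => []
  | _, [_] => []
  | o, t :: ts => (o + leavesT t) :: rootSectors (o + leavesT t) ts

mutual
  def sectsT : ℕ → PTree → List (Finset ℕ)
    | _, .node [] => []
    | o, .node (t :: ts) => (rootSectors o (t :: ts)).toFinset :: sectsL o (t :: ts)
  def sectsL : ℕ → List PTree → List (Finset ℕ)
    | _, [] => []
    | o, t :: ts => sectsT o t ++ sectsL (o + leavesT t) ts
end

def IsNoncrossing {n : ℕ} (π : Finpartition (Finset.Icc 1 n)) : Prop :=
  ∀ i j k l : ℕ, i < j → j < k → k < l →
    ∀ B ∈ π.parts, ∀ B' ∈ π.parts, i ∈ B → k ∈ B → j ∈ B' → l ∈ B' → B = B'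

/-! ### Auxiliary development -/

mutual
theorem leavesT_pos (t : PTree) : 1 ≤ leavesT t := by
  match t with
  | .node [] => simp [leavesT]
  | .node (t :: ts) => have := leavesT_pos t; simp only [leavesT]; omega
theorem leavesL_aux (ts : List PTree) : 0 ≤ leavesL ts := Nat.zero_le _
end

theorem leavesL_pos {ts : List PTree} (h : ts ≠ []) : 1 ≤ leavesL ts := by
  match ts with
  | t :: ts => have := leavesT_pos t; simp only [leavesL]; omega

/-- Crossing relation between two finite sets of naturals. -/
def Cross (B B' : Finset ℕ) : Prop :=
  ∃ i ∈ B, ∃ k ∈ B, ∃ j ∈ B', ∃ l ∈ B', i < j ∧ j < k ∧ k < l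

/-- "No crossing and disjoint" symmetric relation. -/
def NoX (B B' : Finset ℕ) : Prop :=
  Disjoint B B' ∧ ¬ Cross B B' ∧ ¬ Cross B' B

theorem NoX_symm : Symmetric NoX := by
  rintro B B' ⟨h1, h2, h3⟩
  exact ⟨h1.symm, h3, h2⟩

theorem NoX_of_forall_lt {S S' : Finset ℕ} (h : ∀ a ∈ S, ∀ b ∈ S', a < b) : NoX S S' := by
  refine ⟨Finset.disjoint_left.mpr fun a ha ha' => absurd (h a ha a ha') (lt_irrefl a), ?_, ?_⟩
  · rintro ⟨i, hi, k, hk, j, hj, l, hl, h1, h2, h3⟩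
    exact absurd (h k hk j hj) (by omega)
  · rintro ⟨i, hi, k, hk, j, hj, l, hl, h1, h2, h3⟩
    exact absurd (h j hj i hi) (by omega)

theorem foldr_union_eq (l : List (Finset ℕ)) (s : Finset ℕ) :
    l.foldr (· ∪ ·) s = l.foldr (· ∪ ·) ∅ ∪ s := by
  induction l with
  | nil => simp
  | cons a l ih => simp [List.foldr_cons, ih, Finset.union_assoc]

theorem toFinset_sup_eq_foldr (l : List (Finset ℕ)) :
    l.toFinset.sup id = l.foldr (· ∪ ·) ∅ := by
  induction l with
  | nil => simp
  | cons a l ih => rw [List.toFinset_cons, Finset.sup_insert, ih]; rfl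

mutual
theorem goodT (o : ℕ) (t : PTree) (h : Reduced t) :
    (∀ S ∈ sectsT o t, S.Nonempty) ∧
    (∀ S ∈ sectsT o t, S ⊆ Finset.Ioo o (o + leavesT t)) ∧
    List.Pairwise NoX (sectsT o t) ∧
    (sectsT o t).foldr (· ∪ ·) ∅ = Finset.Ioo o (o + leavesT t) ∧
    (sectsT o t).length = inodesT t := by
  match t with
  | .node [] =>
    refine ⟨by simp [sectsT], by simp [sectsT], by simp [sectsT], ?_, by simp [sectsT, inodesT]⟩
    show (∅ : Finset ℕ) = Finset.Ioo o (o + leavesT (.node []))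
    ext x
    simp [leavesT]
  | .node (t :: ts) =>
    rcases h with _ | ⟨_, hlen, hred⟩
    have hredt : Reduced t := hred t (by simp)
    have hredts : ∀ u ∈ ts, Reduced u := fun u hu => hred u (by simp [hu])
    obtain ⟨hL1, hL2, hL3, hL4, hL5, hL6⟩ := goodL o (t :: ts) hred
    have hM : leavesT (.node (t :: ts)) = leavesL (t :: ts) := by
      simp [leavesT, leavesL]
    -- rootSectors is nonempty
    obtain ⟨u, ts', rfl⟩ : ∃ u ts', ts = u :: ts' := by
      match ts with
      | [] => simp at hlen
      | u :: ts' => exact ⟨u, ts', rfl⟩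
    have hRne : rootSectors o (t :: u :: ts') = (o + leavesT t) :: rootSectors (o + leavesT t) (u :: ts') := rfl
    have hst : sectsT o (.node (t :: u :: ts')) =
        (rootSectors o (t :: u :: ts')).toFinset :: sectsL o (t :: u :: ts') := rfl
    rw [hst, hM]
    set R := rootSectors o (t :: u :: ts') with hR
    set L := sectsL o (t :: u :: ts') with hLdef
    -- NoX between the root block and every child block
    have hRoot : ∀ S ∈ L, NoX R.toFinset S := by
      intro S hS
      obtain ⟨p, q, hSpq, hop, hqM, hgap⟩ := hL4 S hS
      refine ⟨?_, ?_, ?_⟩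
      · refine Finset.disjoint_left.mpr fun a ha ha' => ?_
        have h1 := hgap a (List.mem_toFinset.mp ha)
        have h2 := Finset.mem_Ioo.mp (hSpq ha')
        omega
      · rintro ⟨i, hi, k, hk, j, hj, l, hl, h1, h2, h3⟩
        have hjm := Finset.mem_Ioo.mp (hSpq hj)
        have hlm := Finset.mem_Ioo.mp (hSpq hl)
        have := hgap k (List.mem_toFinset.mp hk)
        omega
      · rintro ⟨i, hi, k, hk, j, hj, l, hl, h1, h2, h3⟩
        have him := Finset.mem_Ioo.mp (hSpq hi)
        have hkm := Finset.mem_Ioo.mp (hSpq hk)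
        have := hgap j (List.mem_toFinset.mp hj)
        omega
    refine ⟨?_, ?_, ?_, ?_, ?_⟩
    · intro S hS
      rcases List.mem_cons.mp hS with rfl | hS
      · exact ⟨o + leavesT t, by simp [hRne]⟩
      · exact hL1 S hS
    · intro S hS
      rcases List.mem_cons.mp hS with rfl | hS
      · intro x hx
        have := hL3 x (List.mem_toFinset.mp hx)
        simp only [Finset.mem_Ioo]; omega
      · obtain ⟨p, q, hSpq, hop, hqM, _⟩ := hL4 S hS
        intro x hx
        have := Finset.mem_Ioo.mp (hSpq hx)
        simp only [Finset.mem_Ioo]; omega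
    · exact List.pairwise_cons.mpr ⟨hRoot, hL2⟩
    · rw [List.foldr_cons, Finset.union_comm]
      exact hL5
    · simp only [List.length_cons, hL6]
      simp [inodesT, inodesL]; omega
theorem goodL (o : ℕ) (ts : List PTree) (h : ∀ t ∈ ts, Reduced t) :
    (∀ S ∈ sectsL o ts, S.Nonempty) ∧
    List.Pairwise NoX (sectsL o ts) ∧
    (∀ x ∈ rootSectors o ts, o < x ∧ x < o + leavesL ts) ∧
    (∀ S ∈ sectsL o ts, ∃ p q, S ⊆ Finset.Ioo p q ∧ o ≤ p ∧ q ≤ o + leavesL ts ∧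
        ∀ x ∈ rootSectors o ts, x ≤ p ∨ q ≤ x) ∧
    (sectsL o ts).foldr (· ∪ ·) ∅ ∪ (rootSectors o ts).toFinset = Finset.Ioo o (o + leavesL ts) ∧
    (sectsL o ts).length = inodesL ts := by
  match ts with
  | [] =>
    refine ⟨?_, ?_, ?_, ?_, ?_, ?_⟩ <;> simp [sectsL, rootSectors, leavesL, inodesL]
  | [t] =>
    have hredt : Reduced t := h t (by simp)
    obtain ⟨hT1, hT2, hT3, hT4, hT5⟩ := goodT o t hredt
    have hs : sectsL o [t] = sectsT o t := by simp [sectsL]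
    have hr : rootSectors o [t] = [] := rfl
    have hl : leavesL [t] = leavesT t := by simp [leavesL]
    rw [hs, hr, hl]
    refine ⟨hT1, hT3, by simp, ?_, by simpa using hT4, by simpa [inodesL] using hT5⟩
    intro S hS
    exact ⟨o, o + leavesT t, hT2 S hS, le_refl o, le_refl _, by simp⟩
  | t :: u :: ts' =>
    have hredt : Reduced t := h t (by simp)
    have hredts : ∀ v ∈ (u :: ts'), Reduced v := fun v hv => h v (List.mem_cons_of_mem t hv)
    obtain ⟨hT1, hT2, hT3, hT4, hT5⟩ := goodT o t hredt
    obtain ⟨hL1, hL2, hL3, hL4, hL5, hL6⟩ := goodL (o + leavesT t) (u :: ts') hredts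
    set o' := o + leavesT t with ho'
    have hs : sectsL o (t :: u :: ts') = sectsT o t ++ sectsL o' (u :: ts') := rfl
    have hr : rootSectors o (t :: u :: ts') = o' :: rootSectors o' (u :: ts') := rfl
    have hl : leavesL (t :: u :: ts') = leavesT t + leavesL (u :: ts') := rfl
    have hto : 1 ≤ leavesT t := leavesT_pos t
    have hts : 1 ≤ leavesL (u :: ts') := leavesL_pos (by simp)
    rw [hs, hr, hl]
    refine ⟨?_, ?_, ?_, ?_, ?_, ?_⟩
    · intro S hS
      rcases List.mem_append.mp hS with hS | hS
      · exact hT1 S hS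
      · exact hL1 S hS
    · refine List.pairwise_append.mpr ⟨hT3, hL2, ?_⟩
      intro S hS S' hS'
      refine NoX_of_forall_lt fun a ha b hb => ?_
      have h1 := Finset.mem_Ioo.mp (hT2 S hS ha)
      obtain ⟨p, q, hSpq, hop, hqM, _⟩ := hL4 S' hS'
      have h2 := Finset.mem_Ioo.mp (hSpq hb)
      omega
    · intro x hx
      rcases List.mem_cons.mp hx with rfl | hx
      · omega
      · have := hL3 x hx; omega
    · intro S hS
      rcases List.mem_append.mp hS with hS | hS
      · refine ⟨o, o', hT2 S hS, le_refl o, by omega, ?_⟩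
        intro x hx
        rcases List.mem_cons.mp hx with rfl | hx
        · right; exact le_refl _
        · right; have := hL3 x hx; omega
      · obtain ⟨p, q, hSpq, hop, hqM, hgap⟩ := hL4 S hS
        refine ⟨p, q, hSpq, by omega, by omega, ?_⟩
        intro x hx
        rcases List.mem_cons.mp hx with rfl | hx
        · left; exact hop
        · exact hgap x hx
    · rw [List.foldr_append, foldr_union_eq, hT4, List.toFinset_cons,
        Finset.union_insert, Finset.union_assoc, hL5]
      ext x
      simp only [Finset.mem_insert, Finset.mem_union, Finset.mem_Ioo]
      omega
    · simp only [List.length_append, hT5, hL6, inodesL]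
end

/-! ### Main theorem -/

/-- for a prime Schröder tree `t` of weight `n`, the sets of sectors
seen by the internal vertices are nonempty, pairwise disjoint, their union is
`{1,…,n}`, they form a noncrossing partition of `{1,…,n}`, and the number of
blocks equals the number of internal vertices of `t`. -/
theorem stmt6 (n : ℕ) (hn : 1 ≤ n) (t : PTree) (ht : t ∈ PST n) :
    (∀ Sv ∈ sectsT 0 t, Sv.Nonempty) ∧
    List.Pairwise Disjoint (sectsT 0 t) ∧
    (sectsT 0 t).foldr (· ∪ ·) ∅ = Finset.Icc 1 n ∧
    (∃ π : Finpartition (Finset.Icc 1 n),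
      IsNoncrossing π ∧ π.parts = (sectsT 0 t).toFinset) ∧
    (sectsT 0 t).toFinset.card = inodesT t := by
  obtain ⟨⟨hred, _⟩, hlv⟩ := ht
  obtain ⟨h1, h2, h3, h4, h5⟩ := goodT 0 t hred
  have hIoo : Finset.Ioo 0 (0 + leavesT t) = Finset.Icc 1 n := by
    rw [hlv]; ext x; simp only [Finset.mem_Ioo, Finset.mem_Icc]; omega
  have hunion : (sectsT 0 t).foldr (· ∪ ·) ∅ = Finset.Icc 1 n := by rw [h4, hIoo]
  have hforall : ∀ S ∈ sectsT 0 t, ∀ S' ∈ sectsT 0 t, S ≠ S' → NoX S S' :=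
    fun S hS S' hS' hne => haveI : Std.Symm NoX := ⟨fun a b h => NoX_symm h⟩; h3.forall hS hS' hne
  have hnodup : (sectsT 0 t).Nodup := by
    refine List.Pairwise.imp_of_mem ?_ h3
    intro a b ha hb ⟨hd, _⟩ heq
    subst heq
    obtain ⟨x, hx⟩ := h1 a ha
    exact absurd hx (Finset.disjoint_left.mp hd hx)
  refine ⟨h1, h3.imp (fun hx => hx.1), hunion, ?_, ?_⟩
  · refine ⟨⟨(sectsT 0 t).toFinset, ?_, ?_, ?_⟩, ?_, rfl⟩
    · refine Finset.supIndep_iff_pairwiseDisjoint.mpr ?_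
      intro a ha b hb hne
      exact (hforall a (List.mem_toFinset.mp ha) b (List.mem_toFinset.mp hb) hne).1
    · rw [toFinset_sup_eq_foldr, hunion]
    · intro hmem
      obtain ⟨x, hx⟩ := h1 ∅ (List.mem_toFinset.mp hmem)
      exact absurd hx (Finset.notMem_empty x)
    · intro i j k l hij hjk hkl B hB B' hB' hiB hkB hjB' hlB'
      by_contra hne
      exact (hforall B (List.mem_toFinset.mp hB) B' (List.mem_toFinset.mp hB') hne).2.1
        ⟨i, hiB, k, hkB, j, hjB', l, hlB', hij, hjk, hkl⟩
  · rw [List.toFinset_card_of_nodup hnodup, h5]
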